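/- Let σ : [0,∞) → [0,∞) be a C² convex function with σ(0) = 0 whose derivative σ' is concave. Then for all r, s > 0 one has r·σ'(s) ≤ σ(r) + σ(s). -/

import Mathlib

/-- Inequality (M(T)1): for a C² convex function `σ : [0,∞) → [0,∞)`
with `σ 0 = 0` whose derivative is concave, `r * σ' s ≤ σ r + σ s` for all `r, s > 0`. -/
theorem MT1 (σ : ℝ → ℝ)
    (hσ_nonneg : ∀ r ∈ Set.Ici (0:ℝ), 0 ≤ σ r)
    (hσ_C2 : ContDiffOn ℝ 2 σ (Set.Ici 0))
    (hσ_convex : ConvexOn ℝ (Set.Ici 0) σ)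
    (hσ_zero : σ 0 = 0)
    (hσ'_concave : ConcaveOn ℝ (Set.Ici 0) (deriv σ)) :
    ∀ r s : ℝ, 0 < r → 0 < s → r * deriv σ s ≤ σ r + σ s := by
  intro r s hr hs
  set g := derivWithin σ (Set.Ici 0) with hg_def
  have hdiffOn : DifferentiableOn ℝ σ (Set.Ici 0) := hσ_C2.differentiableOn two_ne_zero
  have hdiff : ∀ x : ℝ, 0 < x → DifferentiableAt ℝ σ x := fun x hx =>
    hdiffOn.differentiableAt (Ici_mem_nhds hx)
  have heq : ∀ x : ℝ, 0 < x → g x = deriv σ x := fun x hx =>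
    derivWithin_of_mem_nhds (Ici_mem_nhds hx)
  have hg1 : ContDiffOn ℝ 1 g (Set.Ici 0) :=
    hσ_C2.derivWithin (uniqueDiffOn_Ici 0) (by norm_num)
  -- g 0 ≥ 0 (right derivative at 0)
  have hg0 : 0 ≤ g 0 := by
    have hd0 : HasDerivWithinAt σ (g 0) (Set.Ioi 0) 0 :=
      ((hdiffOn 0 Set.self_mem_Ici).hasDerivWithinAt).mono (Set.Ioi_subset_Ici le_rfl)
    have htend := (hasDerivWithinAt_iff_tendsto_slope' (by simp)).mp hd0
    refine ge_of_tendsto htend ?_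
    filter_upwards [eventually_mem_nhdsWithin] with t (ht : t ∈ Set.Ioi 0)
    rw [slope_def_field]
    have h1 : 0 ≤ σ t := hσ_nonneg t (Set.mem_Ici.mpr (le_of_lt ht))
    have h2 : (0:ℝ) < t := ht
    rw [hσ_zero, sub_zero, sub_zero]
    positivity
  -- deriv σ 0 ≥ 0
  have hderiv0 : 0 ≤ deriv σ 0 := by
    by_cases h0 : DifferentiableAt ℝ σ 0
    · have := h0.derivWithin (uniqueDiffOn_Ici 0 0 Set.self_mem_Ici)
      rw [← this]; exact hg0
    · rw [deriv_zero_of_not_differentiableAt h0]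
  -- Key inequality: s * deriv σ s ≤ 2 * σ s
  have hkey : s * deriv σ s ≤ 2 * σ s := by
    -- FTC: σ s = ∫ t in 0..s, g t
    have hint_g : IntervalIntegrable g MeasureTheory.volume 0 s := by
      apply ContinuousOn.intervalIntegrable
      apply hg1.continuousOn.mono
      rw [Set.uIcc_of_le hs.le]
      exact fun x hx => hx.1
    have hftc : ∫ t in (0:ℝ)..s, g t = σ s - σ 0 := by
      refine intervalIntegral.integral_eq_sub_of_hasDerivAt_of_le hs.le
        (hσ_C2.continuousOn.mono (fun x hx => hx.1)) (fun t ht => ?_) hint_g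
      rw [heq t ht.1]
      exact (hdiff t ht.1).hasDerivAt
    -- pointwise lower bound
    have hptwise : ∀ t ∈ Set.Icc (0:ℝ) s, t / s * deriv σ s ≤ g t := by
      intro t ht
      rcases eq_or_lt_of_le ht.1 with h | h
      · rw [← h]; simpa using hg0
      · rw [heq t h]
        have hle1 : t / s ≤ 1 := by rw [div_le_one hs]; exact ht.2
        have ha : (0:ℝ) ≤ 1 - t / s := by linarith
        have hb : (0:ℝ) ≤ t / s := by positivity
        have hab : (1 - t / s) + t / s = 1 := by ring
        have hconc := hσ'_concave.2 (Set.self_mem_Ici) (Set.mem_Ici.mpr hs.le) ha hb hab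
        have hts : (1 - t / s) • (0:ℝ) + (t / s) • s = t := by
          simp only [smul_eq_mul]
          field_simp
          ring
        rw [hts] at hconc
        have h1 : 0 ≤ (1 - t / s) * deriv σ 0 := mul_nonneg ha hderiv0
        simp only [smul_eq_mul] at hconc
        linarith
    have hint_lower : IntervalIntegrable (fun t => t / s * deriv σ s)
        MeasureTheory.volume 0 s := by
      apply ContinuousOn.intervalIntegrable
      fun_prop
    have hmono := intervalIntegral.integral_mono_on hs.le hint_lower hint_g hptwise
    have hcalc : ∫ t in (0:ℝ)..s, t / s * deriv σ s = s * deriv σ s / 2 := by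
      have : (fun t : ℝ => t / s * deriv σ s) = fun t : ℝ => t * (deriv σ s / s) := by
        funext t; ring
      rw [this, intervalIntegral.integral_mul_const, integral_id]
      field_simp
      ring
    rw [hcalc, hftc, hσ_zero] at hmono
    linarith
  -- tangent line inequality: deriv σ s * (r - s) ≤ σ r - σ s
  have htan : deriv σ s * (r - s) ≤ σ r - σ s := by
    rcases lt_trichotomy r s with h | h | h
    · have hslope := hσ_convex.slope_le_of_hasDerivAt (Set.mem_Ici.mpr hr.le)
        (Set.mem_Ici.mpr hs.le) h (hdiff s hs).hasDerivAt
      rw [slope_def_field] at hslope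
      have hsr : 0 < s - r := by linarith
      have := (div_le_iff₀ hsr).mp hslope
      nlinarith
    · rw [h]; simp
    · have hslope := hσ_convex.deriv_le_slope (Set.mem_Ici.mpr hs.le)
        (Set.mem_Ici.mpr hr.le) h (hdiff s hs)
      rw [slope_def_field] at hslope
      have hrs : 0 < r - s := by linarith
      have := (le_div_iff₀ hrs).mp hslope
      nlinarith
  nlinarith
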